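/- Estimate for formal Gaussian asymptotic expansions: let n ≥ 1 and let (e_I)_{I ∈ ℕ^n} be complex numbers with |e_I| ≤ C₁ C₂^{|I|} for constants C₁, C₂ > 0. Define for each k ≥ 0 the coefficient a_k := Σ_{I ∈ ℕ^n, |I| = k} e_{2I} (−1)^{|I|} Π_{a=1}^n (2i_a − 1)!!, where (2j−1)!! = (2j−1)(2j−3)⋯3·1 and (−1)!! = 1. Then |a_k| ≤ C₁ C₂^{2k} 2^k (k+n−1 choose k) k!; in particular Σ_k a_k z^k is a Gevrey series of order 1, i.e. |a_k| ≤ C₁' C₂'^k k! for suitable constants. -/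

import Mathlib

open scoped BigOperators

section AuxGaussian
open Finset

lemma df_le (j : ℕ) : Nat.doubleFactorial (2 * j + 1) ≤ 2 ^ (j + 1) * (j + 1).factorial := by
  induction j with
  | zero => simp [Nat.doubleFactorial]
  | succ j ih =>
      have : 2 * (j + 1) + 1 = (2 * j + 1) + 2 := by ring
      rw [this, Nat.doubleFactorial_add_two]
      calc (2 * j + 1 + 2) * Nat.doubleFactorial (2 * j + 1) ≤ (2 * (j + 2)) * (2 ^ (j+1) * (j+1).factorial) :=
            Nat.mul_le_mul (by omega) ih
        _ = 2 ^ (j + 1 + 1) * (j + 1 + 1).factorial := by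
            rw [Nat.factorial_succ (j + 1)]; ring

lemma df_le' (j : ℕ) : Nat.doubleFactorial (2 * j - 1) ≤ 2 ^ j * j.factorial := by
  cases j with
  | zero => simp [Nat.doubleFactorial]
  | succ j =>
      have : 2 * (j + 1) - 1 = 2 * j + 1 := by omega
      rw [this]; exact df_le j

lemma sum_multichoose (m k : ℕ) :
    ∑ b ∈ range (k + 1), Nat.multichoose m b = Nat.multichoose (m + 1) k := by
  induction k with
  | zero => simp [Nat.multichoose]
  | succ k ih =>
      rw [Finset.sum_range_succ, ih, Nat.multichoose_succ_succ, add_comm]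

lemma card_piAntidiag {α : Type*} [DecidableEq α] (s : Finset α) :
    ∀ k : ℕ, (Finset.piAntidiag s k).card = Nat.multichoose s.card k := by
  induction s using Finset.cons_induction with
  | empty =>
      intro k
      rcases k with _ | k
      · simp [Nat.multichoose]
      · simp [Nat.multichoose]
  | cons i s hi ih =>
      intro k
      rw [Finset.piAntidiag_cons hi, Finset.card_disjiUnion]
      simp only [Finset.card_map, ih]
      rw [Finset.Nat.sum_antidiagonal_eq_sum_range_succ (fun a b => Nat.multichoose s.card b)]
      rw [Finset.card_cons, ← sum_multichoose]
      exact Finset.sum_range_reflect (fun b => Nat.multichoose s.card b) (k + 1)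

lemma card_adt (n k : ℕ) : (Finset.Nat.antidiagonalTuple n k).card = (k + n - 1).choose k := by
  rw [← Finset.piAntidiag_univ_fin_eq_antidiagonalTuple]
  rw [card_piAntidiag]
  simp [Nat.multichoose_eq, Nat.add_comm]

lemma choose_le_two_pow' (n k : ℕ) : n.choose k ≤ 2 ^ n := by
  rcases le_or_gt k n with h | h
  · calc n.choose k ≤ ∑ m ∈ Finset.range (n + 1), n.choose m :=
          Finset.single_le_sum (fun i _ => Nat.zero_le _)
            (Finset.mem_range.mpr (Nat.lt_succ_of_le h))
      _ = 2 ^ n := Nat.sum_range_choose n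
  · simp [Nat.choose_eq_zero_of_lt h]

lemma prod_df_le (n k : ℕ) (I : Fin n → ℕ) (hI : ∑ a, I a = k) :
    (∏ a, Nat.doubleFactorial (2 * I a - 1)) ≤ 2 ^ k * k.factorial := by
  calc ∏ a, Nat.doubleFactorial (2 * I a - 1)
      ≤ ∏ a, 2 ^ (I a) * (I a).factorial := Finset.prod_le_prod' fun a _ => df_le' (I a)
    _ = 2 ^ k * ∏ a, (I a).factorial := by
        rw [Finset.prod_mul_distrib, Finset.prod_pow_eq_pow_sum, hI]
    _ ≤ 2 ^ k * k.factorial := by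
        refine Nat.mul_le_mul_left _ ?_
        have := Nat.prod_factorial_dvd_factorial_sum Finset.univ I
        rw [hI] at this
        exact Nat.le_of_dvd k.factorial_pos this


end AuxGaussian

/-- Estimate for formal Gaussian asymptotic expansions: if `(e_I)_{I ∈ ℕ^n}` satisfy
`|e_I| ≤ C₁ C₂^{|I|}`, then the coefficients
`a_k = Σ_{|I|=k} e_{2I} (−1)^{|I|} Π_a (2 i_a − 1)!!`
satisfy `|a_k| ≤ C₁ C₂^{2k} 2^k (k+n−1 choose k) k!`; in particular `Σ a_k z^k` is a
Gevrey series of order 1 (`|a_k| ≤ C₁' C₂'^k k!` for suitable constants).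
Here `(2j−1)!!` is the double factorial with `(−1)!! = 1` (in Lean, `Nat.doubleFactorial
(2*j - 1)`, where `2*0 - 1 = 0` and `0‼ = 1`), and the sum is over multi-indices
`I ∈ ℕ^n` of total degree `k` (`Finset.Nat.antidiagonalTuple n k`). -/
theorem gaussian_asymptotic_estimate (n : ℕ) (hn : 1 ≤ n) (e : (Fin n → ℕ) → ℂ)
    (C₁ C₂ : ℝ) (hC₁ : 0 < C₁) (hC₂ : 0 < C₂)
    (he : ∀ I : Fin n → ℕ, ‖e I‖ ≤ C₁ * C₂ ^ (∑ a, I a)) :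
    (∀ k : ℕ,
      ‖∑ I ∈ Finset.Nat.antidiagonalTuple n k,
          e (fun a => 2 * I a) * (-1) ^ k *
            ∏ a, (Nat.doubleFactorial (2 * I a - 1) : ℂ)‖ ≤
        C₁ * C₂ ^ (2 * k) * 2 ^ k * (k + n - 1).choose k * k.factorial) ∧
    ∃ C₁' C₂' : ℝ, 0 < C₁' ∧ 0 < C₂' ∧ ∀ k : ℕ,
      ‖∑ I ∈ Finset.Nat.antidiagonalTuple n k,
          e (fun a => 2 * I a) * (-1) ^ k *
            ∏ a, (Nat.doubleFactorial (2 * I a - 1) : ℂ)‖ ≤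
        C₁' * C₂' ^ k * k.factorial := by
  have main : ∀ k : ℕ,
      ‖∑ I ∈ Finset.Nat.antidiagonalTuple n k,
          e (fun a => 2 * I a) * (-1) ^ k *
            ∏ a, (Nat.doubleFactorial (2 * I a - 1) : ℂ)‖ ≤
        C₁ * C₂ ^ (2 * k) * 2 ^ k * (k + n - 1).choose k * k.factorial := by
    intro k
    have hterm : ∀ I ∈ Finset.Nat.antidiagonalTuple n k,
        ‖e (fun a => 2 * I a) * (-1) ^ k *
            ∏ a, (Nat.doubleFactorial (2 * I a - 1) : ℂ)‖ ≤
          C₁ * C₂ ^ (2 * k) * (2 ^ k * k.factorial) := by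
      intro I hI
      have hIk : ∑ a, I a = k := Finset.Nat.mem_antidiagonalTuple.mp hI
      have h1 : ‖(-1 : ℂ) ^ k‖ = 1 := by
        rw [norm_pow, norm_neg, norm_one, one_pow]
      have h2 : (∏ a, (Nat.doubleFactorial (2 * I a - 1) : ℂ)) =
          ((∏ a, Nat.doubleFactorial (2 * I a - 1) : ℕ) : ℂ) := by
        push_cast; ring
      rw [norm_mul, norm_mul, h1, mul_one, h2, Complex.norm_natCast]
      have h3 : ‖e (fun a => 2 * I a)‖ ≤ C₁ * C₂ ^ (2 * k) := by
        have := he (fun a => 2 * I a)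
        rwa [show (∑ a, 2 * I a) = 2 * k by rw [← Finset.mul_sum, hIk]] at this
      have h4 : ((∏ a, Nat.doubleFactorial (2 * I a - 1) : ℕ) : ℝ) ≤
          ((2 ^ k * k.factorial : ℕ) : ℝ) := by
        exact_mod_cast prod_df_le n k I hIk
      calc ‖e fun a => 2 * I a‖ * ((∏ a, Nat.doubleFactorial (2 * I a - 1) : ℕ) : ℝ)
          ≤ (C₁ * C₂ ^ (2 * k)) * ((2 ^ k * k.factorial : ℕ) : ℝ) := by
            apply mul_le_mul h3 h4 (by positivity) (by positivity)
        _ = C₁ * C₂ ^ (2 * k) * (2 ^ k * k.factorial) := by push_cast; ring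
    calc ‖∑ I ∈ Finset.Nat.antidiagonalTuple n k,
          e (fun a => 2 * I a) * (-1) ^ k *
            ∏ a, (Nat.doubleFactorial (2 * I a - 1) : ℂ)‖
        ≤ ∑ I ∈ Finset.Nat.antidiagonalTuple n k,
            ‖e (fun a => 2 * I a) * (-1) ^ k *
              ∏ a, (Nat.doubleFactorial (2 * I a - 1) : ℂ)‖ := norm_sum_le _ _
      _ ≤ ∑ _I ∈ Finset.Nat.antidiagonalTuple n k,
            C₁ * C₂ ^ (2 * k) * (2 ^ k * k.factorial) := Finset.sum_le_sum hterm
      _ = ((k + n - 1).choose k : ℝ) * (C₁ * C₂ ^ (2 * k) * (2 ^ k * k.factorial)) := by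
            rw [Finset.sum_const, card_adt, nsmul_eq_mul]
      _ = C₁ * C₂ ^ (2 * k) * 2 ^ k * (k + n - 1).choose k * k.factorial := by
            push_cast; ring
  refine ⟨main, C₁ * 2 ^ n, 4 * C₂ ^ 2, by positivity, by positivity, fun k => ?_⟩
  refine (main k).trans ?_
  have hch : ((k + n - 1).choose k : ℝ) ≤ 2 ^ (k + n) := by
    calc ((k + n - 1).choose k : ℝ) ≤ ((2 : ℕ) ^ (k + n - 1) : ℕ) := by
          exact_mod_cast choose_le_two_pow' (k + n - 1) k
      _ ≤ 2 ^ (k + n) := by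
          have : (2 : ℝ) ^ (k + n - 1) ≤ 2 ^ (k + n) :=
            pow_le_pow_right₀ one_le_two (by omega)
          exact_mod_cast this
  calc C₁ * C₂ ^ (2 * k) * 2 ^ k * (k + n - 1).choose k * k.factorial
      ≤ C₁ * C₂ ^ (2 * k) * 2 ^ k * 2 ^ (k + n) * k.factorial := by
        have h0 : (0:ℝ) ≤ C₁ * C₂ ^ (2 * k) * 2 ^ k := by positivity
        have h1 : (0:ℝ) ≤ (k.factorial : ℝ) := by positivity
        exact mul_le_mul_of_nonneg_right (mul_le_mul_of_nonneg_left hch h0) h1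
    _ = (C₁ * 2 ^ n) * (4 * C₂ ^ 2) ^ k * k.factorial := by
        have h4 : (4 : ℝ) ^ k = 2 ^ k * 2 ^ k := by
          rw [show (4 : ℝ) = 2 * 2 by norm_num, mul_pow]
        rw [mul_pow, h4, pow_add, pow_mul]
        ring
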